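/- Let ψ : [−m, 0] → ℝ be C² with ψ(0) = 0, ψ(−m) = 0, ψ'(0) < 0, ψ'(−m) > 0, and suppose there exist points −m ≤ a ≤ b ≤ 0 such that ψ is convex on (−m, a) and on (b, 0) and concave on (a, b). Then ψ(τ) > 0 for all τ ∈ (−m, 0). -/

import Mathlib

open Set

/-- A continuous function monotone on an open interval is monotone on the closed interval. -/
lemma monoIcc_of_cont {g : ℝ → ℝ} (hg : Continuous g) {p q : ℝ} (hpq : p < q)
    (hm : MonotoneOn g (Ioo p q)) : MonotoneOn g (Icc p q) := by
  have h1 : ∀ x ∈ Ioo p q, g p ≤ g x := by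
    intro x hx
    haveI : (nhdsWithin p (Ioo p x)).NeBot := by
      apply mem_closure_iff_nhdsWithin_neBot.mp
      rw [closure_Ioo hx.1.ne]
      exact left_mem_Icc.mpr hx.1.le
    have ht : Filter.Tendsto g (nhdsWithin p (Ioo p x)) (nhds (g p)) :=
      (hg.tendsto p).mono_left nhdsWithin_le_nhds
    refine le_of_tendsto ht ?_
    filter_upwards [self_mem_nhdsWithin] with y hy
    exact hm ⟨hy.1, hy.2.trans hx.2⟩ hx hy.2.le
  have h2 : ∀ x ∈ Ioo p q, g x ≤ g q := by
    intro x hx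
    haveI : (nhdsWithin q (Ioo x q)).NeBot := by
      apply mem_closure_iff_nhdsWithin_neBot.mp
      rw [closure_Ioo hx.2.ne]
      exact right_mem_Icc.mpr hx.2.le
    have ht : Filter.Tendsto g (nhdsWithin q (Ioo x q)) (nhds (g q)) :=
      (hg.tendsto q).mono_left nhdsWithin_le_nhds
    refine ge_of_tendsto ht ?_
    filter_upwards [self_mem_nhdsWithin] with y hy
    exact hm hx ⟨hx.1.trans hy.1, hy.2⟩ hy.1.le
  have hc : ((p + q) / 2) ∈ Ioo p q := ⟨by linarith, by linarith⟩
  intro x hx y hy hxy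
  rcases eq_or_lt_of_le hxy with rfl | hxy'
  · exact le_rfl
  rcases eq_or_lt_of_le hx.1 with rfl | hpx
  · rcases eq_or_lt_of_le hy.2 with rfl | hyq
    · exact (h1 _ hc).trans (h2 _ hc)
    · exact h1 y ⟨hxy', hyq⟩
  · rcases eq_or_lt_of_le hy.2 with rfl | hyq
    · exact h2 x ⟨hpx, hxy'⟩
    · exact hm ⟨hpx, hxy'.trans hyq⟩ ⟨hpx.trans hxy', hyq⟩ hxy

lemma antiIcc_of_cont {g : ℝ → ℝ} (hg : Continuous g) {p q : ℝ} (hpq : p < q)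
    (hm : AntitoneOn g (Ioo p q)) : AntitoneOn g (Icc p q) := by
  intro x hx y hy hxy
  have := monoIcc_of_cont hg.neg hpq hm.neg hx hy hxy
  simpa using this

theorem stmt_16 (m : ℝ) (hm : 0 < m) (ψ : ℝ → ℝ) (hψ : ContDiff ℝ 2 ψ)
    (h0 : ψ 0 = 0) (hmval : ψ (-m) = 0)
    (hd0 : deriv ψ 0 < 0) (hdm : 0 < deriv ψ (-m))
    (a b : ℝ) (hab : -m ≤ a ∧ a ≤ b ∧ b ≤ 0)
    (hconv1 : ConvexOn ℝ (Ioo (-m) a) ψ)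
    (hconv2 : ConvexOn ℝ (Ioo b 0) ψ)
    (hconc : ConcaveOn ℝ (Ioo a b) ψ) :
    ∀ τ ∈ Ioo (-m) 0, 0 < ψ τ := by
  obtain ⟨hma, hab', hb0⟩ := hab
  have hdiff : Differentiable ℝ ψ := hψ.differentiable (by norm_num)
  have hgc : Continuous (deriv ψ) := hψ.continuous_deriv one_le_two
  intro τ hτ
  rcases le_or_gt 0 (deriv ψ τ) with hcase | hcase
  · -- derivative nonnegative at τ : ψ is monotone on [-m, τ] and positive near -m
    have hτb : τ ≤ b := by
      by_contra h
      push_neg at h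
      have hb0' : b < 0 := h.trans hτ.2
      have hmono := monoIcc_of_cont hgc hb0'
        (hconv2.monotoneOn_deriv fun x _ => (hdiff x))
      have : deriv ψ τ ≤ deriv ψ 0 := hmono ⟨h.le, hτ.2.le⟩ ⟨hb0'.le, le_refl 0⟩ hτ.2.le
      linarith
    have hg0 : ∀ s ∈ Ioo (-m) τ, 0 ≤ deriv ψ s := by
      intro s hs
      rcases lt_or_ge s a with hsa | has
      · have hma' : -m < a := hs.1.trans hsa
        have hmono := monoIcc_of_cont hgc hma'
          (hconv1.monotoneOn_deriv fun x _ => (hdiff x))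
        have : deriv ψ (-m) ≤ deriv ψ s :=
          hmono ⟨le_refl _, hma'.le⟩ ⟨hs.1.le, hsa.le⟩ hs.1.le
        linarith
      · have habs : a < b := lt_of_le_of_lt has (hs.2.trans_le hτb)
        have hanti := antiIcc_of_cont hgc habs
          (hconc.antitoneOn_deriv fun x _ => (hdiff x))
        have : deriv ψ τ ≤ deriv ψ s :=
          hanti ⟨has, hs.2.le.trans hτb⟩ ⟨has.trans hs.2.le, hτb⟩ hs.2.le
        linarith
    have hmono : MonotoneOn ψ (Icc (-m) τ) := by
      apply monotoneOn_of_deriv_nonneg (convex_Icc _ _) hdiff.continuous.continuousOn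
        hdiff.differentiableOn
      rwa [interior_Icc]
    -- a point u near -m where ψ is positive
    obtain ⟨ε, hε, hball⟩ :=
      Metric.isOpen_iff.mp (isOpen_lt continuous_const hgc) (-m) hdm
    set u := min (-m + ε / 2) ((-m + τ) / 2) with hu
    have hu1 : -m < u := lt_min (by linarith) (by linarith [hτ.1])
    have hu2 : u < τ := (min_le_right _ _).trans_lt (by linarith [hτ.1])
    have hpos : ∀ s ∈ Ioo (-m) u, 0 < deriv ψ s := by
      intro s hs
      apply hball
      rw [Metric.mem_ball, Real.dist_eq, abs_of_pos (by linarith [hs.1])]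
      have := hs.2.trans_le (min_le_left _ _)
      linarith
    have hsm : StrictMonoOn ψ (Icc (-m) u) := by
      apply strictMonoOn_of_deriv_pos (convex_Icc _ _) hdiff.continuous.continuousOn
      rwa [interior_Icc]
    have hψu : 0 < ψ u := by
      have := hsm (left_mem_Icc.mpr hu1.le) (right_mem_Icc.mpr hu1.le) hu1
      rwa [hmval] at this
    have : ψ u ≤ ψ τ := hmono ⟨hu1.le, hu2.le⟩ ⟨hτ.1.le, le_refl τ⟩ hu2.le
    linarith
  · -- derivative negative at τ : ψ is antitone on [τ, 0] and positive near 0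
    have haτ : a ≤ τ := by
      by_contra h
      push_neg at h
      have hma' : -m < a := hτ.1.trans h
      have hmono := monoIcc_of_cont hgc hma'
        (hconv1.monotoneOn_deriv fun x _ => (hdiff x))
      have : deriv ψ (-m) ≤ deriv ψ τ := hmono ⟨le_refl _, hma'.le⟩ ⟨hτ.1.le, h.le⟩ hτ.1.le
      linarith
    have hg0 : ∀ s ∈ Ioo τ 0, deriv ψ s ≤ 0 := by
      intro s hs
      rcases lt_or_ge b s with hbs | hsb
      · have hb0' : b < 0 := hbs.trans hs.2
        have hmono := monoIcc_of_cont hgc hb0'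
          (hconv2.monotoneOn_deriv fun x _ => (hdiff x))
        have : deriv ψ s ≤ deriv ψ 0 :=
          hmono ⟨hbs.le, hs.2.le⟩ ⟨hb0'.le, le_refl 0⟩ hs.2.le
        linarith
      · have habs : a < b := (haτ.trans_lt hs.1).trans_le hsb
        have hanti := antiIcc_of_cont hgc habs
          (hconc.antitoneOn_deriv fun x _ => (hdiff x))
        have : deriv ψ s ≤ deriv ψ τ :=
          hanti ⟨haτ, hs.1.le.trans hsb⟩ ⟨haτ.trans hs.1.le, hsb⟩ hs.1.le
        linarith
    have hanti : AntitoneOn ψ (Icc τ 0) := by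
      apply antitoneOn_of_deriv_nonpos (convex_Icc _ _) hdiff.continuous.continuousOn
        hdiff.differentiableOn
      rwa [interior_Icc]
    obtain ⟨ε, hε, hball⟩ :=
      Metric.isOpen_iff.mp (isOpen_lt hgc continuous_const) 0 hd0
    set v := max (-ε / 2) (τ / 2) with hv
    have hv1 : v < 0 := max_lt (by linarith) (by linarith [hτ.2])
    have hv2 : τ < v := lt_of_lt_of_le (by linarith [hτ.2]) (le_max_right _ _)
    have hneg : ∀ s ∈ Ioo v 0, deriv ψ s < 0 := by
      intro s hs
      apply hball
      rw [Metric.mem_ball, Real.dist_eq, sub_zero, abs_of_neg hs.2]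
      have := (le_max_left (-ε / 2) (τ / 2)).trans_lt hs.1
      linarith
    have hsa : StrictAntiOn ψ (Icc v 0) := by
      apply strictAntiOn_of_deriv_neg (convex_Icc _ _) hdiff.continuous.continuousOn
      rwa [interior_Icc]
    have hψv : 0 < ψ v := by
      have := hsa (left_mem_Icc.mpr hv1.le) (right_mem_Icc.mpr hv1.le) hv1
      rwa [h0] at this
    have : ψ v ≤ ψ τ := hanti ⟨le_refl τ, hτ.2.le⟩ ⟨hv2.le, hv1.le⟩ hv2.le
    linarith
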